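/- arXiv:1709.08765 — 7 statements merged into one kernel-verified Lean document; each statement's English description precedes it below -/
import Mathlib

section
/- If W is an n×n row-stochastic matrix all of whose entries are at least β > 0, and v = W u for vectors u, v ∈ ℝⁿ, then max_i v_i − min_i v_i ≤ (1 − 2β)(max_i u_i − min_i u_i). -/
theorem spread_contraction (n : ℕ) (hn : 0 < n) (W : Matrix (Fin n) (Fin n) ℝ)
    (β : ℝ) (hβ : 0 < β)
    (hnonneg : ∀ i j, 0 ≤ W i j)
    (hrow : ∀ i, ∑ j, W i j = 1)
    (hentry : ∀ i j, β ≤ W i j)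
    (u v : Fin n → ℝ) (hv : v = W.mulVec u) :
    Finset.univ.sup' ⟨⟨0, hn⟩, Finset.mem_univ _⟩ v
      - Finset.univ.inf' ⟨⟨0, hn⟩, Finset.mem_univ _⟩ v
    ≤ (1 - 2 * β) *
      (Finset.univ.sup' ⟨⟨0, hn⟩, Finset.mem_univ _⟩ u
        - Finset.univ.inf' ⟨⟨0, hn⟩, Finset.mem_univ _⟩ u) := by
  subst hv
  set ne : Finset.Nonempty (Finset.univ : Finset (Fin n)) :=
    ⟨⟨0, hn⟩, Finset.mem_univ _⟩ with hne
  set M := Finset.univ.sup' ne u with hM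
  set m := Finset.univ.inf' ne u with hm
  have hMm : m ≤ M :=
    le_trans (Finset.inf'_le u (Finset.mem_univ (⟨0, hn⟩ : Fin n)))
      (Finset.le_sup' u (Finset.mem_univ (⟨0, hn⟩ : Fin n)))
  have huM : ∀ j, u j ≤ M := fun j => Finset.le_sup' u (Finset.mem_univ j)
  have hmu : ∀ j, m ≤ u j := fun j => Finset.inf'_le u (Finset.mem_univ j)
  have key : ∀ i k, W.mulVec u i - W.mulVec u k ≤ (1 - 2 * β) * (M - m) := by
    intro i k
    by_cases h1 : n = 1
    · have hik : i = k := by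
        apply Fin.ext; omega
      have hMm' : M = m := by
        have h0 : ∀ j : Fin n, j = ⟨0, hn⟩ := fun j => Fin.ext (by omega)
        have hMle : M ≤ u ⟨0, hn⟩ := Finset.sup'_le _ _ (fun j _ => by rw [h0 j])
        have hlem : u ⟨0, hn⟩ ≤ m := Finset.le_inf' _ _ (fun j _ => by rw [h0 j])
        linarith [hmu ⟨0, hn⟩, huM ⟨0, hn⟩]
      rw [hik, hMm']
      simp
    · have hn2 : 2 ≤ n := by omega
      have expand : W.mulVec u i - W.mulVec u k = ∑ j, (W i j - W k j) * u j := by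
        simp only [Matrix.mulVec, dotProduct, sub_mul]
        rw [Finset.sum_sub_distrib]
      rw [expand]
      have step1 : ∑ j, (W i j - W k j) * u j ≤
          ∑ j, (max (W i j - W k j) 0 * M + min (W i j - W k j) 0 * m) := by
        apply Finset.sum_le_sum
        intro j _
        have hd : W i j - W k j = max (W i j - W k j) 0 + min (W i j - W k j) 0 := by
          rw [max_add_min]; ring
        conv_lhs => rw [hd]
        rw [add_mul]
        have h1' : max (W i j - W k j) 0 * u j ≤ max (W i j - W k j) 0 * M :=
          mul_le_mul_of_nonneg_left (huM j) (le_max_right _ _)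
        have h2' : min (W i j - W k j) 0 * u j ≤ min (W i j - W k j) 0 * m :=
          mul_le_mul_of_nonpos_left (hmu j) (min_le_right _ _)
        linarith
      have hmaxeq : ∀ j, max (W i j - W k j) 0 = W i j - min (W i j) (W k j) := by
        intro j
        rcases le_total (W i j) (W k j) with h | h
        · rw [max_eq_right (by linarith), min_eq_left h]; ring
        · rw [max_eq_left (by linarith), min_eq_right h]
      have hmineq : ∀ j, min (W i j - W k j) 0 = min (W i j) (W k j) - W k j := by
        intro j
        rcases le_total (W i j) (W k j) with h | h
        · rw [min_eq_left (by linarith), min_eq_left h]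
        · rw [min_eq_right (by linarith), min_eq_right h]; ring
      set S := ∑ j, min (W i j) (W k j) with hS
      have hA : ∑ j, max (W i j - W k j) 0 = 1 - S := by
        simp only [hmaxeq]
        rw [Finset.sum_sub_distrib, hrow i, hS]
      have hB : ∑ j, min (W i j - W k j) 0 = S - 1 := by
        simp only [hmineq]
        rw [Finset.sum_sub_distrib, hrow k, hS]
      have hsum : ∑ j, (max (W i j - W k j) 0 * M + min (W i j - W k j) 0 * m)
          = (1 - S) * (M - m) := by
        rw [Finset.sum_add_distrib, ← Finset.sum_mul, ← Finset.sum_mul, hA, hB]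
        ring
      have hSge : 2 * β ≤ S := by
        have : (n : ℝ) * β ≤ S := by
          rw [hS]
          calc (n : ℝ) * β = ∑ _j : Fin n, β := by
                simp [Finset.sum_const, mul_comm]
            _ ≤ ∑ j, min (W i j) (W k j) :=
                Finset.sum_le_sum (fun j _ => le_min (hentry i j) (hentry k j))
        have hn2' : (2 : ℝ) ≤ (n : ℝ) := by exact_mod_cast hn2
        nlinarith
      calc ∑ j, (W i j - W k j) * u j ≤ (1 - S) * (M - m) := by rw [← hsum]; exact step1
        _ ≤ (1 - 2 * β) * (M - m) := by nlinarith
  obtain ⟨i, _, hi⟩ := Finset.exists_mem_eq_sup' ne (W.mulVec u)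
  obtain ⟨k, _, hk⟩ := Finset.exists_mem_eq_inf' ne (W.mulVec u)
  rw [hi, hk]
  exact key i k
end

section
/- Let A⁰, A¹, A², … be row-stochastic n×n matrices such that each matrix has all diagonal entries positive, every positive entry is at least α > 0, and the directed graph associated with each Aᵏ is strongly connected. Then every entry of the product A^{n-1} A^{n-2} ⋯ A⁰ is at least α^n. -/
/-- `matProd A k = A^{k-1} * A^{k-2} * ⋯ * A^0`. -/
def matProd {n : ℕ} (A : ℕ → Matrix (Fin n) (Fin n) ℝ) : ℕ → Matrix (Fin n) (Fin n) ℝ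
  | 0 => 1
  | k + 1 => A k * matProd A k

lemma matProd_nonneg {n : ℕ} (A : ℕ → Matrix (Fin n) (Fin n) ℝ)
    (h : ∀ k i j, 0 ≤ A k i j) : ∀ m i j, 0 ≤ matProd A m i j := by
  intro m
  induction m with
  | zero =>
    intro i j
    simp only [matProd, Matrix.one_apply]
    split <;> norm_num
  | succ m ih =>
    intro i j
    show 0 ≤ (A m * matProd A m) i j
    rw [Matrix.mul_apply]
    exact Finset.sum_nonneg fun k _ => mul_nonneg (h m i k) (ih k j)

lemma matProd_pos_ge {n : ℕ} (A : ℕ → Matrix (Fin n) (Fin n) ℝ) (α : ℝ) (hα : 0 < α)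
    (hnonneg : ∀ k i j, 0 ≤ A k i j)
    (hentry : ∀ k i j, 0 < A k i j → α ≤ A k i j) :
    ∀ m i j, 0 < matProd A m i j → α ^ m ≤ matProd A m i j := by
  have hnn := matProd_nonneg A hnonneg
  intro m
  induction m with
  | zero =>
    intro i j h
    by_cases hij : i = j <;> simp [matProd, Matrix.one_apply, hij] at h ⊢
  | succ m ih =>
    intro i j h
    have hsum : matProd A (m + 1) i j = ∑ k, A m i k * matProd A m k j := by
      show (A m * matProd A m) i j = _
      rw [Matrix.mul_apply]
    rw [hsum] at h ⊢
    obtain ⟨k, -, hk⟩ := Finset.exists_lt_of_sum_lt (by simpa using h :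
      ∑ k : Fin n, (0 : ℝ) < ∑ k, A m i k * matProd A m k j)
    have hA : 0 < A m i k := by
      rcases (hnonneg m i k).lt_or_eq with h' | h'
      · exact h'
      · rw [← h'] at hk; simp at hk
    have hP : 0 < matProd A m k j := by
      rcases (hnn m k j).lt_or_eq with h' | h'
      · exact h'
      · rw [← h'] at hk; simp at hk
    have h1 : α ^ (m + 1) ≤ A m i k * matProd A m k j := by
      rw [pow_succ']
      exact mul_le_mul (hentry m i k hA) (ih k j hP) (by positivity)
        (hnonneg m i k)
    have h2 : A m i k * matProd A m k j ≤ ∑ k, A m i k * matProd A m k j :=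
      Finset.single_le_sum (fun l _ => mul_nonneg (hnonneg m i l) (hnn m l j))
        (Finset.mem_univ k)
    linarith

lemma exit_edge {β : Type*} {R : β → β → Prop} {S : Finset β} :
    ∀ {a b : β}, Relation.ReflTransGen R a b → a ∈ S → b ∉ S →
      ∃ x ∈ S, ∃ y, y ∉ S ∧ R x y := by
  intro a b h
  induction h with
  | refl => intro ha hb; exact absurd ha hb
  | @tail c d h₁ h₂ ih =>
    intro ha hb
    by_cases hc : c ∈ S
    · exact ⟨c, hc, d, hb, h₂⟩
    · exact ih ha hc

theorem product_positive (n : ℕ) (hn : 0 < n) (A : ℕ → Matrix (Fin n) (Fin n) ℝ)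
    (α : ℝ) (hα : 0 < α)
    (hnonneg : ∀ k i j, 0 ≤ A k i j)
    (hrow : ∀ k i, ∑ j, A k i j = 1)
    (hdiag : ∀ k i, 0 < A k i i)
    (hentry : ∀ k i j, 0 < A k i j → α ≤ A k i j)
    (hconn : ∀ k i j, Relation.ReflTransGen (fun a b => 0 < A k b a) i j) :
    ∀ i j, α ^ n ≤ matProd A n i j := by
  intro i j
  have hnn := matProd_nonneg A hnonneg
  set S : ℕ → Finset (Fin n) :=
    fun m => Finset.univ.filter (fun x => 0 < matProd A m x j) with hS
  have step : ∀ m x y, 0 < A m x y → y ∈ S m → x ∈ S (m + 1) := by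
    intro m x y hA hy
    simp only [hS, Finset.mem_filter, Finset.mem_univ, true_and] at hy ⊢
    have hsum : matProd A (m + 1) x j = ∑ k, A m x k * matProd A m k j := by
      show (A m * matProd A m) x j = _
      rw [Matrix.mul_apply]
    have h1 : A m x y * matProd A m y j ≤ ∑ k, A m x k * matProd A m k j :=
      Finset.single_le_sum (fun l _ => mul_nonneg (hnonneg m x l) (hnn m l j))
        (Finset.mem_univ y)
    have h2 : 0 < A m x y * matProd A m y j := mul_pos hA hy
    rw [hsum]; linarith
  have mono : ∀ m, S m ⊆ S (m + 1) := fun m x hx => step m x x (hdiag m x) hx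
  have hj0 : j ∈ S 0 := by
    simp only [hS, Finset.mem_filter, Finset.mem_univ, true_and]
    simp [matProd, Matrix.one_apply]
  have hjm : ∀ m, j ∈ S m := by
    intro m
    induction m with
    | zero => exact hj0
    | succ m ih => exact mono m ih
  have hcard : ∀ m, min (m + 1) n ≤ (S m).card := by
    intro m
    induction m with
    | zero =>
      have h1 : 1 ≤ (S 0).card := Finset.card_pos.mpr ⟨j, hj0⟩
      exact le_trans (min_le_left 1 n) h1
    | succ m ih =>
      by_cases hfull : S m = Finset.univ
      · have huniv : S (m + 1) = Finset.univ :=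
          Finset.univ_subset_iff.mp (hfull ▸ mono m)
        have : (S (m + 1)).card = n := by simp [huniv]
        omega
      · obtain ⟨b, hb⟩ : ∃ b, b ∉ S m := by
          by_contra h
          push_neg at h
          exact hfull (Finset.eq_univ_iff_forall.mpr h)
        obtain ⟨x, hx, y, hy, hR⟩ := exit_edge (hconn m j b) (hjm m) hb
        have hyS : y ∈ S (m + 1) := step m y x hR hx
        have hsub : insert y (S m) ⊆ S (m + 1) := by
          intro z hz
          rcases Finset.mem_insert.mp hz with h | h
          · exact h ▸ hyS
          · exact mono m h
        have hc1 : (S m).card + 1 ≤ (S (m + 1)).card := by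
          calc (S m).card + 1 = (insert y (S m)).card :=
                (Finset.card_insert_of_notMem hy).symm
            _ ≤ _ := Finset.card_le_card hsub
        have hlt : (S m).card < n := by
          have := Finset.card_lt_card (Finset.ssubset_univ_iff.mpr hfull)
          simpa using this
        omega
  have hfulln : S n = Finset.univ := by
    apply Finset.eq_univ_of_card
    have h1 := hcard n
    have h2 : (S n).card ≤ n := by simpa using Finset.card_le_univ (S n)
    simp only [Fintype.card_fin]
    omega
  have hi : i ∈ S n := hfulln.symm ▸ Finset.mem_univ i
  simp only [hS, Finset.mem_filter, Finset.mem_univ, true_and] at hi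
  exact matProd_pos_ge A α hα hnonneg hentry n i j hi
end

section
/- Let (Aᵏ) be a sequence of row-stochastic n×n matrices and suppose there exist β > 0 and a positive integer m such that for every l ≥ 0 every entry of the product A^{(l+1)m−1} ⋯ A^{lm} is at least β. Let x^{k+1} = Aᵏ xᵏ with x⁰ ∈ ℝⁿ given. Then the spread of xᵏ converges to 0 geometrically: for all l, spread(x^{lm}) ≤ (1 − 2β)^l · spread(x⁰). -/
/-- `blockProd A s len = A^{s+len-1} * ⋯ * A^s`. -/
def blockProd {n : ℕ} (A : ℕ → Matrix (Fin n) (Fin n) ℝ) (s len : ℕ) :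
    Matrix (Fin n) (Fin n) ℝ :=
  matProd (fun t => A (s + t)) len

lemma matProd_rowsum {n : ℕ} (A : ℕ → Matrix (Fin n) (Fin n) ℝ)
    (h : ∀ k i, ∑ j, A k i j = 1) : ∀ k i, ∑ j, matProd A k i j = 1 := by
  intro k
  induction k with
  | zero => intro i; simp [matProd, Matrix.one_apply]
  | succ k ih =>
    intro i
    simp only [matProd, Matrix.mul_apply]
    rw [Finset.sum_comm]
    have : ∀ l, ∑ j, A k i l * matProd A k l j = A k i l := by
      intro l
      rw [← Finset.mul_sum, ih l, mul_one]
    simp_rw [this]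
    exact h k i

lemma x_formula {n : ℕ} (A : ℕ → Matrix (Fin n) (Fin n) ℝ)
    (x : ℕ → Fin n → ℝ) (hx : ∀ k, x (k + 1) = (A k).mulVec (x k)) :
    ∀ s k, x (s + k) = (matProd (fun t => A (s + t)) k).mulVec (x s) := by
  intro s k
  induction k with
  | zero => simp [matProd]
  | succ k ih =>
    have : s + (k + 1) = (s + k) + 1 := rfl
    rw [this, hx (s + k), ih]
    show (A (s + k)).mulVec ((matProd (fun t => A (s + t)) k).mulVec (x s)) = _
    rw [Matrix.mulVec_mulVec]
    rfl

lemma spread_contract {n : ℕ} (hn : 0 < n) (B : Matrix (Fin n) (Fin n) ℝ) (β : ℝ)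
    (hβ0 : 0 ≤ β) (hB : ∀ i j, β ≤ B i j) (hrow : ∀ i, ∑ j, B i j = 1)
    (v : Fin n → ℝ) :
    Finset.univ.sup' ⟨⟨0, hn⟩, Finset.mem_univ _⟩ (B.mulVec v)
      - Finset.univ.inf' ⟨⟨0, hn⟩, Finset.mem_univ _⟩ (B.mulVec v)
    ≤ (1 - 2 * β) *
      (Finset.univ.sup' ⟨⟨0, hn⟩, Finset.mem_univ _⟩ v
        - Finset.univ.inf' ⟨⟨0, hn⟩, Finset.mem_univ _⟩ v) := by
  set ne : (Finset.univ : Finset (Fin n)).Nonempty := ⟨⟨0, hn⟩, Finset.mem_univ _⟩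
  set M := Finset.univ.sup' ne v with hM
  set μ := Finset.univ.inf' ne v with hμ
  have hle : ∀ j, v j ≤ M := fun j => Finset.le_sup' v (Finset.mem_univ j)
  have hge : ∀ j, μ ≤ v j := fun j => Finset.inf'_le v (Finset.mem_univ j)
  have hμM : μ ≤ M := le_trans (hge ⟨0, hn⟩) (hle ⟨0, hn⟩)
  obtain ⟨j0, _, hj0⟩ := Finset.exists_mem_eq_inf' ne v
  obtain ⟨j1, _, hj1⟩ := Finset.exists_mem_eq_sup' ne v
  have hub : ∀ i, B.mulVec v i ≤ β * μ + (1 - β) * M := by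
    intro i
    have hsum : B i j0 + ∑ j ∈ Finset.univ.erase j0, B i j = 1 := by
      rw [Finset.add_sum_erase _ _ (Finset.mem_univ j0)]; exact hrow i
    have h1 : B.mulVec v i = B i j0 * v j0 + ∑ j ∈ Finset.univ.erase j0, B i j * v j := by
      rw [Matrix.mulVec, dotProduct]
      rw [← Finset.add_sum_erase _ _ (Finset.mem_univ j0)]
    have h2 : ∑ j ∈ Finset.univ.erase j0, B i j * v j
        ≤ ∑ j ∈ Finset.univ.erase j0, B i j * M := by
      refine Finset.sum_le_sum fun j _ => ?_
      exact mul_le_mul_of_nonneg_left (hle j) (le_trans hβ0 (hB i j))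
    have h3 : B i j0 * v j0 ≤ β * μ + (B i j0 - β) * M := by
      rw [← hj0]
      nlinarith [hB i j0, hμM]
    have h4 : ∑ j ∈ Finset.univ.erase j0, B i j * M
        = (1 - B i j0) * M := by
      rw [← Finset.sum_mul]; congr 1; linarith
    rw [h1]
    calc B i j0 * v j0 + ∑ j ∈ Finset.univ.erase j0, B i j * v j
        ≤ (β * μ + (B i j0 - β) * M) + (1 - B i j0) * M := by
          rw [← h4] at *; linarith
      _ = β * μ + (1 - β) * M := by ring
  have hlb : ∀ i, β * M + (1 - β) * μ ≤ B.mulVec v i := by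
    intro i
    have hsum : B i j1 + ∑ j ∈ Finset.univ.erase j1, B i j = 1 := by
      rw [Finset.add_sum_erase _ _ (Finset.mem_univ j1)]; exact hrow i
    have h1 : B.mulVec v i = B i j1 * v j1 + ∑ j ∈ Finset.univ.erase j1, B i j * v j := by
      rw [Matrix.mulVec, dotProduct]
      rw [← Finset.add_sum_erase _ _ (Finset.mem_univ j1)]
    have h2 : ∑ j ∈ Finset.univ.erase j1, B i j * μ
        ≤ ∑ j ∈ Finset.univ.erase j1, B i j * v j := by
      refine Finset.sum_le_sum fun j _ => ?_
      exact mul_le_mul_of_nonneg_left (hge j) (le_trans hβ0 (hB i j))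
    have h3 : β * M + (B i j1 - β) * μ ≤ B i j1 * v j1 := by
      rw [← hj1]
      nlinarith [hB i j1, hμM]
    have h4 : ∑ j ∈ Finset.univ.erase j1, B i j * μ
        = (1 - B i j1) * μ := by
      rw [← Finset.sum_mul]; congr 1; linarith
    rw [h1]
    calc β * M + (1 - β) * μ = (β * M + (B i j1 - β) * μ) + (1 - B i j1) * μ := by ring
      _ ≤ B i j1 * v j1 + ∑ j ∈ Finset.univ.erase j1, B i j * v j := by
          rw [← h4] at *; linarith
  have hs : Finset.univ.sup' ne (B.mulVec v) ≤ β * μ + (1 - β) * M :=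
    Finset.sup'_le _ _ fun i _ => hub i
  have hi : β * M + (1 - β) * μ ≤ Finset.univ.inf' ne (B.mulVec v) :=
    Finset.le_inf' _ _ fun i _ => hlb i
  have := sub_le_sub hs hi
  linarith

theorem geometric_spread_decay (n : ℕ) (hn : 0 < n)
    (A : ℕ → Matrix (Fin n) (Fin n) ℝ)
    (hnonneg : ∀ k i j, 0 ≤ A k i j)
    (hrow : ∀ k i, ∑ j, A k i j = 1)
    (β : ℝ) (hβ : 0 < β) (m : ℕ) (hm : 0 < m)
    (hblock : ∀ l i j, β ≤ blockProd A (l * m) m i j)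
    (x : ℕ → Fin n → ℝ)
    (hx : ∀ k, x (k + 1) = (A k).mulVec (x k)) :
    ∀ l : ℕ,
      Finset.univ.sup' ⟨⟨0, hn⟩, Finset.mem_univ _⟩ (x (l * m))
        - Finset.univ.inf' ⟨⟨0, hn⟩, Finset.mem_univ _⟩ (x (l * m))
      ≤ (1 - 2 * β) ^ l *
        (Finset.univ.sup' ⟨⟨0, hn⟩, Finset.mem_univ _⟩ (x 0)
          - Finset.univ.inf' ⟨⟨0, hn⟩, Finset.mem_univ _⟩ (x 0)) := by
  set ne : (Finset.univ : Finset (Fin n)).Nonempty := ⟨⟨0, hn⟩, Finset.mem_univ _⟩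
  have hblockrow : ∀ l i, ∑ j, blockProd A (l * m) m i j = 1 := by
    intro l i
    exact matProd_rowsum _ (fun k i => hrow _ i) m i
  have hstep : ∀ l, x ((l + 1) * m) = (blockProd A (l * m) m).mulVec (x (l * m)) := by
    intro l
    have : (l + 1) * m = l * m + m := by ring
    rw [this, x_formula A x hx (l * m) m]
    rfl
  rcases Nat.lt_or_ge n 2 with h2 | h2
  · -- n = 1 : spread is always 0
    have hn1 : n = 1 := by omega
    subst hn1
    have hz : ∀ k, Finset.univ.sup' ne (x k) - Finset.univ.inf' ne (x k) = 0 := by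
      intro k
      have : ∀ (w : Fin 1 → ℝ), Finset.univ.sup' ne w = w 0 ∧ Finset.univ.inf' ne w = w 0 := by
        intro w
        constructor
        · apply le_antisymm
          · exact Finset.sup'_le _ _ fun i _ => by rw [Subsingleton.elim i 0]
          · exact Finset.le_sup' w (Finset.mem_univ 0)
        · apply le_antisymm
          · exact Finset.inf'_le w (Finset.mem_univ 0)
          · exact Finset.le_inf' _ _ fun i _ => by rw [Subsingleton.elim i 0]
      obtain ⟨h1, h2⟩ := this (x k)
      rw [h1, h2, sub_self]
    intro l
    rw [hz, hz, mul_zero]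
  · -- n ≥ 2 : 2β ≤ 1
    have h2β : 2 * β ≤ 1 := by
      have hi0 : Fin n := ⟨0, hn⟩
      have hj1 : (⟨1, by omega⟩ : Fin n) ≠ (⟨0, hn⟩ : Fin n) := by
        intro h; simpa using congrArg Fin.val h
      have hsub : ({⟨1, by omega⟩, ⟨0, hn⟩} : Finset (Fin n)) ⊆ Finset.univ :=
        Finset.subset_univ _
      have := Finset.sum_le_sum_of_subset_of_nonneg hsub
        (fun j _ _ => le_trans hβ.le (hblock 0 ⟨0, hn⟩ j))
      rw [Finset.sum_pair hj1, hblockrow 0 ⟨0, hn⟩] at this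
      have hb1 := hblock 0 ⟨0, hn⟩ ⟨1, by omega⟩
      have hb0 := hblock 0 ⟨0, hn⟩ ⟨0, hn⟩
      linarith
    intro l
    induction l with
    | zero => simp
    | succ l ih =>
      have hc := spread_contract hn (blockProd A (l * m) m) β hβ.le
        (hblock l) (hblockrow l) (x (l * m))
      rw [← hstep l] at hc
      calc Finset.univ.sup' ne (x ((l + 1) * m)) - Finset.univ.inf' ne (x ((l + 1) * m))
          ≤ (1 - 2 * β) * (Finset.univ.sup' ne (x (l * m)) - Finset.univ.inf' ne (x (l * m))) := hc
        _ ≤ (1 - 2 * β) * ((1 - 2 * β) ^ l *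
              (Finset.univ.sup' ne (x 0) - Finset.univ.inf' ne (x 0))) :=
            mul_le_mul_of_nonneg_left ih (by linarith)
        _ = (1 - 2 * β) ^ (l + 1) *
              (Finset.univ.sup' ne (x 0) - Finset.univ.inf' ne (x 0)) := by ring
end

section
/- Suppose x^{k+1} = Aᵏ xᵏ + Δᵏ where each Aᵏ is an n×n doubly stochastic matrix satisfying σ₂(Aᵏ) ≤ λ < 1 for all k, and the perturbations satisfy ‖Δᵏ‖₂ ≤ L′ for all k. Let e^k = x^k − ((𝟏ᵀx^k)/n)𝟏 denote the deviation from the mean. Then for all k, ‖e^k‖₂ ≤ λ^k‖e⁰‖₂ + L′/(1−λ). -/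
/-- Euclidean norm of a vector in ℝⁿ. -/
noncomputable def l2norm {n : ℕ} (v : Fin n → ℝ) : ℝ := Real.sqrt (∑ i, v i ^ 2)

/-- The second-largest singular value of a doubly stochastic matrix: the operator norm of
`A` restricted to the subspace orthogonal to the all-ones vector. -/
noncomputable def sigma2 {n : ℕ} (A : Matrix (Fin n) (Fin n) ℝ) : ℝ :=
  sSup {r | ∃ y : Fin n → ℝ, (∑ i, y i = 0) ∧ l2norm y = 1 ∧ r = l2norm (A.mulVec y)}

lemma l2norm_eq_norm {n : ℕ} (v : Fin n → ℝ) :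
    l2norm v = ‖(WithLp.equiv 2 (Fin n → ℝ)).symm v‖ := by
  rw [EuclideanSpace.norm_eq, l2norm]
  congr 1
  apply Finset.sum_congr rfl
  intro i _
  rw [Real.norm_eq_abs, sq_abs]
  rfl

lemma l2norm_nonneg {n : ℕ} (v : Fin n → ℝ) : 0 ≤ l2norm v := Real.sqrt_nonneg _

lemma l2norm_add_le {n : ℕ} (v w : Fin n → ℝ) :
    l2norm (v + w) ≤ l2norm v + l2norm w := by
  simp only [l2norm_eq_norm]; exact norm_add_le _ _

lemma l2norm_smul {n : ℕ} (c : ℝ) (v : Fin n → ℝ) :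
    l2norm (c • v) = |c| * l2norm v := by
  simp only [l2norm_eq_norm]
  rw [show (WithLp.equiv 2 (Fin n → ℝ)).symm (c • v)
      = c • (WithLp.equiv 2 (Fin n → ℝ)).symm v from rfl, norm_smul, Real.norm_eq_abs]

lemma l2norm_eq_zero_iff {n : ℕ} (v : Fin n → ℝ) : l2norm v = 0 ↔ v = 0 := by
  simp only [l2norm_eq_norm, norm_eq_zero]
  constructor
  · intro h; funext i; exact congrFun (congrArg (WithLp.equiv 2 (Fin n → ℝ)) h) i
  · intro h; simp [h]

lemma l2norm_mulVec_le {n : ℕ} (A : Matrix (Fin n) (Fin n) ℝ) (y : Fin n → ℝ) :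
    l2norm (A.mulVec y) ≤ Real.sqrt (∑ i, ∑ j, A i j ^ 2) * l2norm y := by
  rw [l2norm, l2norm, ← Real.sqrt_mul (by positivity)]
  apply Real.sqrt_le_sqrt
  rw [Finset.sum_mul]
  apply Finset.sum_le_sum
  intro i _
  have := Finset.sum_mul_sq_le_sq_mul_sq Finset.univ (fun j => A i j) y
  simpa [Matrix.mulVec, dotProduct] using this

lemma sigma2_contract {n : ℕ} (A : Matrix (Fin n) (Fin n) ℝ) (lam : ℝ)
    (hσ : sigma2 A ≤ lam) (y : Fin n → ℝ) (hy : ∑ i, y i = 0) :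
    l2norm (A.mulVec y) ≤ lam * l2norm y := by
  by_cases h0 : y = 0
  · subst h0
    rw [Matrix.mulVec_zero, (l2norm_eq_zero_iff (0 : Fin n → ℝ)).2 rfl]
    simp
  · have hcpos : 0 < l2norm y := by
      rcases lt_or_eq_of_le (l2norm_nonneg y) with h | h
      · exact h
      · exact absurd ((l2norm_eq_zero_iff y).1 h.symm) h0
    set c := l2norm y with hc
    set u := c⁻¹ • y with hu
    have hu_sum : ∑ i, u i = 0 := by
      simp only [hu, Pi.smul_apply, smul_eq_mul, ← Finset.mul_sum, hy, mul_zero]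
    have hu_norm : l2norm u = 1 := by
      rw [hu, l2norm_smul, abs_of_pos (inv_pos.2 hcpos), ← hc, inv_mul_cancel₀ hcpos.ne']
    have hbdd : BddAbove {r | ∃ y : Fin n → ℝ,
        (∑ i, y i = 0) ∧ l2norm y = 1 ∧ r = l2norm (A.mulVec y)} := by
      refine ⟨Real.sqrt (∑ i, ∑ j, A i j ^ 2), ?_⟩
      rintro r ⟨z, -, hz1, rfl⟩
      have := l2norm_mulVec_le A z
      rwa [hz1, mul_one] at this
    have hmem : l2norm (A.mulVec u) ∈ {r | ∃ y : Fin n → ℝ,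
        (∑ i, y i = 0) ∧ l2norm y = 1 ∧ r = l2norm (A.mulVec y)} := ⟨u, hu_sum, hu_norm, rfl⟩
    have hle : l2norm (A.mulVec u) ≤ lam := (le_csSup hbdd hmem).trans hσ
    have hyu : A.mulVec y = c • A.mulVec u := by
      rw [hu, Matrix.mulVec_smul, smul_smul, mul_inv_cancel₀ hcpos.ne', one_smul]
    rw [hyu, l2norm_smul, abs_of_pos hcpos, mul_comm lam c]
    exact mul_le_mul_of_nonneg_left hle hcpos.le

lemma mean_sub_sum_zero {n : ℕ} (hn : 0 < n) (v : Fin n → ℝ) :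
    ∑ i, (v - fun _ : Fin n => (∑ j, v j) / n) i = 0 := by
  have hnn : (0:ℝ) < n := by exact_mod_cast hn
  simp only [Pi.sub_apply, Finset.sum_sub_distrib, Finset.sum_const, Finset.card_univ,
    Fintype.card_fin, nsmul_eq_mul]
  field_simp
  ring

lemma mean_sub_le {n : ℕ} (hn : 0 < n) (v : Fin n → ℝ) :
    l2norm (v - fun _ : Fin n => (∑ j, v j) / n) ≤ l2norm v := by
  have hnn : (0:ℝ) < n := by exact_mod_cast hn
  rw [l2norm, l2norm]
  apply Real.sqrt_le_sqrt
  have key : ∑ i, (v - fun _ : Fin n => (∑ j, v j) / n) i ^ 2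
      = (∑ i, v i ^ 2) - (∑ j, v j) ^ 2 / n := by
    simp only [Pi.sub_apply, sub_sq, Finset.sum_add_distrib, Finset.sum_sub_distrib,
      Finset.sum_const, Finset.card_univ, Fintype.card_fin, nsmul_eq_mul, ← Finset.sum_mul,
      ← Finset.mul_sum]
    field_simp
    ring
  rw [key]
  have : 0 ≤ (∑ j, v j) ^ 2 / n := by positivity
  linarith

theorem perturbed_consensus_bound (n : ℕ) (hn : 0 < n)
    (A : ℕ → Matrix (Fin n) (Fin n) ℝ)
    (hnonneg : ∀ k i j, 0 ≤ A k i j)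
    (hrow : ∀ k i, ∑ j, A k i j = 1)
    (hcol : ∀ k j, ∑ i, A k i j = 1)
    (lam : ℝ) (hlam0 : 0 ≤ lam) (hlam1 : lam < 1)
    (hσ : ∀ k, sigma2 (A k) ≤ lam)
    (L' : ℝ)
    (Δ x : ℕ → Fin n → ℝ)
    (hΔ : ∀ k, l2norm (Δ k) ≤ L')
    (hx : ∀ k, x (k + 1) = (A k).mulVec (x k) + Δ k) :
    ∀ k, l2norm (x k - fun _ => (∑ i, x k i) / n)
      ≤ lam ^ k * l2norm (x 0 - fun _ => (∑ i, x 0 i) / n) + L' / (1 - lam) := by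
  have hnn : (0:ℝ) < n := by exact_mod_cast hn
  set e : ℕ → Fin n → ℝ := fun k => x k - fun _ => (∑ i, x k i) / n with he
  have hsum_e : ∀ k, ∑ i, e k i = 0 := fun k => mean_sub_sum_zero hn (x k)
  have hL' : 0 ≤ L' := le_trans (l2norm_nonneg (Δ 0)) (hΔ 0)
  have hrec : ∀ k, e (k + 1)
      = (A k).mulVec (e k) + (Δ k - fun _ => (∑ i, Δ k i) / n) := by
    intro k
    have hAx : ∑ i, ((A k).mulVec (x k)) i = ∑ i, x k i := by
      simp only [Matrix.mulVec, dotProduct]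
      rw [Finset.sum_comm]
      apply Finset.sum_congr rfl
      intro j _
      rw [← Finset.sum_mul, hcol k j, one_mul]
    funext i
    have hAv : ((A k).mulVec (e k)) i
        = ((A k).mulVec (x k)) i - (∑ j, x k j) / n := by
      simp only [he, Matrix.mulVec, dotProduct, Pi.sub_apply, mul_sub,
        Finset.sum_sub_distrib, ← Finset.sum_mul, hrow k i, one_mul]
    show x (k + 1) i - (∑ j, x (k + 1) j) / (n : ℝ)
        = (A k).mulVec (e k) i + (Δ k i - (∑ j, Δ k j) / n)
    rw [hAv, hx k]
    simp only [Pi.add_apply, Finset.sum_add_distrib, hAx]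
    ring
  have hstep : ∀ k, l2norm (e (k + 1)) ≤ lam * l2norm (e k) + L' := by
    intro k
    rw [hrec k]
    calc l2norm ((A k).mulVec (e k) + (Δ k - fun _ => (∑ i, Δ k i) / n))
        ≤ l2norm ((A k).mulVec (e k)) + l2norm (Δ k - fun _ => (∑ i, Δ k i) / n) :=
          l2norm_add_le _ _
      _ ≤ lam * l2norm (e k) + L' := by
          have h1 := sigma2_contract (A k) lam (hσ k) (e k) (hsum_e k)
          have h2 := (mean_sub_le hn (Δ k)).trans (hΔ k)
          exact add_le_add h1 h2
  intro k
  induction k with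
  | zero =>
    have : 0 ≤ L' / (1 - lam) := div_nonneg hL' (by linarith)
    simpa using by linarith [this]
  | succ k ih =>
    have h1 : l2norm (e (k + 1)) ≤ lam * l2norm (e k) + L' := hstep k
    have h2 : lam * l2norm (e k) ≤ lam * (lam ^ k * l2norm (e 0) + L' / (1 - lam)) :=
      mul_le_mul_of_nonneg_left ih hlam0
    have h3 : lam * (lam ^ k * l2norm (e 0) + L' / (1 - lam)) + L'
        = lam ^ (k + 1) * l2norm (e 0) + L' / (1 - lam) := by
      have hne : (1 : ℝ) - lam ≠ 0 := by linarith
      field_simp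
      ring
    calc l2norm (e (k + 1)) ≤ lam * l2norm (e k) + L' := h1
      _ ≤ lam * (lam ^ k * l2norm (e 0) + L' / (1 - lam)) + L' := by linarith
      _ = lam ^ (k + 1) * l2norm (e 0) + L' / (1 - lam) := h3
end

section
/- Let h : ℝ → ℝ be convex with a nonempty set U* of minimizers and all subgradients bounded in absolute value by L. Let u^{k+1} = u^k − α g^k where g^k is a subgradient of h at u^k and α = 1/√T for k = 0,…,T−1. Then for any u* ∈ U*, h((1/T)∑_{k=0}^{T−1} u^k) − h(u*) ≤ (|u⁰ − u*|² + L²)/(2√T). -/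
theorem subgradient_method_constant_stepsize
    (h : ℝ → ℝ) (hconv : ConvexOn ℝ Set.univ h)
    (L : ℝ) (ustar : ℝ) (hmin : ∀ v, h ustar ≤ h v)
    (T : ℕ) (hT : 0 < T) (u g : ℕ → ℝ)
    (hsub : ∀ k v, h (u k) + g k * (v - u k) ≤ h v)
    (hgL : ∀ k, |g k| ≤ L)
    (hu : ∀ k, u (k + 1) = u k - (1 / Real.sqrt T) * g k) :
    h ((∑ k ∈ Finset.range T, u k) / T) - h ustar
      ≤ (|u 0 - ustar| ^ 2 + L ^ 2) / (2 * Real.sqrt T) := by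
  set α : ℝ := 1 / Real.sqrt T with hαdef
  have hTpos : (0 : ℝ) < T := by exact_mod_cast hT
  have hsT : 0 < Real.sqrt T := Real.sqrt_pos.mpr hTpos
  have hα : 0 < α := by positivity
  -- one step inequality
  have step : ∀ k, (u (k+1) - ustar)^2 ≤
      (u k - ustar)^2 + α^2 * L^2 - 2*α*(h (u k) - h ustar) := by
    intro k
    have hgsq : (g k)^2 ≤ L^2 := by
      have := hgL k
      nlinarith [abs_nonneg (g k), sq_abs (g k)]
    have hlin : h (u k) - h ustar ≤ g k * (u k - ustar) := by
      have := hsub k ustar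
      nlinarith
    rw [hu k]
    nlinarith [mul_le_mul_of_nonneg_left hlin (by positivity : (0:ℝ) ≤ 2*α),
      mul_le_mul_of_nonneg_left hgsq (sq_nonneg α)]
  -- telescoping
  have tel : ∀ n, 2*α*(∑ k ∈ Finset.range n, (h (u k) - h ustar)) ≤
      (u 0 - ustar)^2 - (u n - ustar)^2 + n * (α^2 * L^2) := by
    intro n
    induction n with
    | zero => simp
    | succ n ih =>
      rw [Finset.sum_range_succ]
      have := step n
      push_cast
      nlinarith
  have hαsq : α^2 = 1/T := by
    rw [hαdef, div_pow, one_pow, Real.sq_sqrt hTpos.le]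
  have key : (∑ k ∈ Finset.range T, (h (u k) - h ustar)) ≤
      ((u 0 - ustar)^2 + L^2) * Real.sqrt T / 2 := by
    have htel := tel T
    have hTα : (T : ℝ) * (α^2 * L^2) = L^2 := by
      rw [hαsq]; field_simp
    rw [hTα] at htel
    have huT : 0 ≤ (u T - ustar)^2 := sq_nonneg _
    have hsum : 2*α*(∑ k ∈ Finset.range T, (h (u k) - h ustar)) ≤
        (u 0 - ustar)^2 + L^2 := by nlinarith
    have h3 : Real.sqrt T * (2*α*(∑ k ∈ Finset.range T, (h (u k) - h ustar)))
        = 2 * (∑ k ∈ Finset.range T, (h (u k) - h ustar)) := by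
      rw [hαdef]; field_simp
    have h4 := mul_le_mul_of_nonneg_left hsum hsT.le
    rw [h3] at h4
    linarith
  -- Jensen
  have jensen : h ((∑ k ∈ Finset.range T, u k) / T) ≤
      (∑ k ∈ Finset.range T, h (u k)) / T := by
    have hj := hconv.map_sum_le (t := Finset.range T) (w := fun _ => 1/(T:ℝ))
      (p := u) (fun i _ => by positivity)
      (by rw [Finset.sum_const]; simp; field_simp)
      (fun i _ => Set.mem_univ _)
    have hw1 : ∑ k ∈ Finset.range T, (1/(T:ℝ)) * u k
        = (∑ k ∈ Finset.range T, u k)/T := by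
      rw [← Finset.mul_sum]; ring
    have hw2 : ∑ k ∈ Finset.range T, (1/(T:ℝ)) * h (u k)
        = (∑ k ∈ Finset.range T, h (u k))/T := by
      rw [← Finset.mul_sum]; ring
    simp only [smul_eq_mul] at hj
    rwa [hw1, hw2] at hj
  have habs : |u 0 - ustar|^2 = (u 0 - ustar)^2 := sq_abs _
  rw [habs]
  have hsum' : (∑ k ∈ Finset.range T, h (u k)) - T * h ustar ≤
      ((u 0 - ustar)^2 + L^2) * Real.sqrt T / 2 := by
    have hsplit : (∑ k ∈ Finset.range T, (h (u k) - h ustar)) =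
        (∑ k ∈ Finset.range T, h (u k)) - T * h ustar := by
      rw [Finset.sum_sub_distrib]; simp [mul_comm]
    linarith [hsplit ▸ key]
  have hfinal : h ((∑ k ∈ Finset.range T, u k) / T) - h ustar ≤
      ((u 0 - ustar)^2 + L^2) * Real.sqrt T / (2 * T) := by
    have h1 : h ((∑ k ∈ Finset.range T, u k) / T) - h ustar ≤
        ((∑ k ∈ Finset.range T, h (u k)) - T * h ustar) / T := by
      rw [sub_div]
      have hc : (T : ℝ) * h ustar / T = h ustar := by field_simp
      rw [hc]
      linarith [jensen]
    calc h ((∑ k ∈ Finset.range T, u k) / T) - h ustar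
        ≤ ((∑ k ∈ Finset.range T, h (u k)) - T * h ustar) / T := h1
      _ ≤ (((u 0 - ustar)^2 + L^2) * Real.sqrt T / 2) / T := by gcongr
      _ = ((u 0 - ustar)^2 + L^2) * Real.sqrt T / (2 * T) := by ring
  have heq : ((u 0 - ustar)^2 + L^2) * Real.sqrt T / (2 * T) =
      ((u 0 - ustar)^2 + L^2) / (2 * Real.sqrt T) := by
    have hss : Real.sqrt T * Real.sqrt T = T := Real.mul_self_sqrt hTpos.le
    field_simp
    nlinarith
  linarith [heq ▸ hfinal]
end

section
/- Let h : ℝ → ℝ be convex with nonempty minimizer set U* and subgradients bounded by L, and let u^{k+1} = u^k − α^k g^k with g^k a subgradient of h at u^k, where the nonnegative stepsizes satisfy ∑ α^k = ∞ and ∑ (α^k)² < ∞. Then for any u* ∈ U*, h((∑_{l=0}^k α^l u^l)/(∑_{l=0}^k α^l)) → h(u*) as k → ∞. -/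
open Filter

theorem subgradient_method_diminishing_stepsize
    (h : ℝ → ℝ) (hconv : ConvexOn ℝ Set.univ h)
    (L : ℝ) (ustar : ℝ) (hmin : ∀ v, h ustar ≤ h v)
    (α : ℕ → ℝ) (hα0 : ∀ k, 0 ≤ α k)
    (hdiv : Tendsto (fun k => ∑ l ∈ Finset.range (k + 1), α l) atTop atTop)
    (hsq : Summable fun k => (α k) ^ 2)
    (u g : ℕ → ℝ)
    (hsub : ∀ k v, h (u k) + g k * (v - u k) ≤ h v)
    (hgL : ∀ k, |g k| ≤ L)
    (hu : ∀ k, u (k + 1) = u k - α k * g k) :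
    Tendsto (fun k =>
        h ((∑ l ∈ Finset.range (k + 1), α l * u l) / (∑ l ∈ Finset.range (k + 1), α l)))
      atTop (nhds (h ustar)) := by
  set S : ℕ → ℝ := fun k => ∑ l ∈ Finset.range (k + 1), α l with hS
  set T : ℝ := ∑' k, (α k) ^ 2 with hT
  set D : ℝ := (u 0 - ustar) ^ 2 + L ^ 2 * T with hD
  -- single step inequality
  have step : ∀ k, (u (k + 1) - ustar) ^ 2 + 2 * (α k * (h (u k) - h ustar))
      ≤ (u k - ustar) ^ 2 + L ^ 2 * (α k) ^ 2 := by
    intro k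
    have h1 := hsub k ustar
    have h2 : (g k) ^ 2 ≤ L ^ 2 := sq_le_sq' (neg_le_of_abs_le (hgL k)) (le_of_abs_le (hgL k))
    have h3 : (α k) ^ 2 * (g k) ^ 2 ≤ (α k) ^ 2 * L ^ 2 :=
      mul_le_mul_of_nonneg_left h2 (sq_nonneg _)
    have h4 : h (u k) - h ustar ≤ g k * (u k - ustar) := by nlinarith [h1]
    have h5 : α k * (h (u k) - h ustar) ≤ α k * (g k * (u k - ustar)) :=
      mul_le_mul_of_nonneg_left h4 (hα0 k)
    rw [hu k]
    nlinarith [h3, h5]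
  -- summed inequality
  have sumineq : ∀ k, (u (k + 1) - ustar) ^ 2
      + 2 * ∑ l ∈ Finset.range (k + 1), α l * (h (u l) - h ustar)
      ≤ (u 0 - ustar) ^ 2 + L ^ 2 * ∑ l ∈ Finset.range (k + 1), (α l) ^ 2 := by
    intro k
    induction k with
    | zero => simpa using step 0
    | succ n ih =>
        have := step (n + 1)
        rw [Finset.sum_range_succ, Finset.sum_range_succ (fun l => (α l) ^ 2)]
        nlinarith [this, ih]
  have hL2 : (0:ℝ) ≤ L ^ 2 := sq_nonneg _
  have hsumD : ∀ k, ∑ l ∈ Finset.range (k + 1), α l * (h (u l) - h ustar) ≤ D / 2 := by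
    intro k
    have h1 := sumineq k
    have h2 : ∑ l ∈ Finset.range (k + 1), (α l) ^ 2 ≤ T :=
      Summable.sum_le_tsum _ (fun i _ => sq_nonneg _) hsq
    have h3 : L ^ 2 * ∑ l ∈ Finset.range (k + 1), (α l) ^ 2 ≤ L ^ 2 * T :=
      mul_le_mul_of_nonneg_left h2 hL2
    nlinarith [sq_nonneg (u (k + 1) - ustar)]
  -- upper bound when S k > 0
  have upper : ∀ k, 0 < S k →
      h ((∑ l ∈ Finset.range (k + 1), α l * u l) / S k) ≤ h ustar + D / (2 * S k) := by
    intro k hSk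
    have jensen := hconv.map_centerMass_le (t := Finset.range (k + 1)) (w := α) (p := u)
      (fun i _ => hα0 i) hSk (fun i _ => Set.mem_univ _)
    simp only [Finset.centerMass, smul_eq_mul, Function.comp] at jensen
    have heq : (∑ l ∈ Finset.range (k + 1), α l * u l) / S k
        = (S k)⁻¹ * ∑ l ∈ Finset.range (k + 1), α l * u l := by
      rw [div_eq_inv_mul]
    rw [heq]
    refine le_trans jensen ?_
    have hsum : ∑ l ∈ Finset.range (k + 1), α l * h (u l)
        = (∑ l ∈ Finset.range (k + 1), α l * (h (u l) - h ustar)) + S k * h ustar := by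
      rw [hS, Finset.sum_mul]
      rw [← Finset.sum_add_distrib]
      apply Finset.sum_congr rfl
      intro i _; ring
    have : (S k)⁻¹ * ∑ l ∈ Finset.range (k + 1), α l * h (u l)
        ≤ (S k)⁻¹ * (D / 2 + S k * h ustar) := by
      apply mul_le_mul_of_nonneg_left _ (inv_nonneg.mpr hSk.le)
      rw [hsum]
      exact add_le_add_left (hsumD k) _
    refine le_trans this ?_
    rw [mul_add, inv_mul_cancel_left₀ hSk.ne']
    have h6 : (S k)⁻¹ * (D / 2) = D / (2 * S k) := by
      rw [div_eq_inv_mul, div_eq_inv_mul, mul_inv]; ring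
    rw [h6]; linarith
  -- squeeze
  have hSpos : ∀ᶠ k in atTop, 0 < S k := hdiv.eventually_gt_atTop 0
  have htop : Tendsto (fun k => 2 * S k) atTop atTop := hdiv.const_mul_atTop two_pos
  have hzero : Tendsto (fun k => D / (2 * S k)) atTop (nhds 0) :=
    Tendsto.div_atTop tendsto_const_nhds htop
  have hupperlim : Tendsto (fun k => h ustar + D / (2 * S k)) atTop (nhds (h ustar)) := by
    have := tendsto_const_nhds (x := h ustar) (f := atTop (α := ℕ)) |>.add hzero
    simpa using this
  refine tendsto_of_tendsto_of_tendsto_of_le_of_le' tendsto_const_nhds hupperlim ?_ ?_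
  · exact Eventually.of_forall fun k => hmin _
  · filter_upwards [hSpos] with k hk
    exact upper k hk
end

section
/- Let y^{k+1} = Aᵏ y^k with y⁰ = 𝟏, where each Aᵏ is an n×n column-stochastic matrix whose positive entries are at least 1/n and whose diagonal entries are all positive, and suppose every product of n consecutive matrices A^{(l+1)n−1}⋯A^{ln} has all entries at least (1/n)^n. Then y_i^k ≥ (1/n)^{2n} for all i and all k. -/
theorem push_sum_weights_lower_bound (n : ℕ) (hn : 0 < n)
    (A : ℕ → Matrix (Fin n) (Fin n) ℝ)
    (hnonneg : ∀ k i j, 0 ≤ A k i j)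
    (hcol : ∀ k j, ∑ i, A k i j = 1)
    (hdiag : ∀ k i, 0 < A k i i)
    (hpos : ∀ k i j, 0 < A k i j → (1 : ℝ) / n ≤ A k i j)
    (hblock : ∀ l i j, ((1 : ℝ) / n) ^ n ≤ blockProd A (l * n) n i j)
    (y : ℕ → Fin n → ℝ)
    (hy0 : y 0 = fun _ => 1)
    (hy : ∀ k, y (k + 1) = (A k).mulVec (y k)) :
    ∀ k i, ((1 : ℝ) / n) ^ (2 * n) ≤ y k i := by
  have hn' : (0:ℝ) < n := by exact_mod_cast hn
  have h1n : (0:ℝ) < 1/n := by positivity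
  have h1n1 : (1:ℝ)/n ≤ 1 := by
    rw [div_le_one hn']; exact_mod_cast hn
  have hynn : ∀ k j, 0 ≤ y k j := by
    intro k
    induction k with
    | zero => intro j; rw [hy0]; norm_num
    | succ k ih =>
      intro j
      rw [hy k]
      simp only [Matrix.mulVec, dotProduct]
      exact Finset.sum_nonneg fun m _ => mul_nonneg (hnonneg k j m) (ih m)
  have hsum : ∀ k, ∑ j, y k j = n := by
    intro k
    induction k with
    | zero => simp [hy0]
    | succ k ih =>
      rw [hy k]
      simp only [Matrix.mulVec, dotProduct]
      rw [Finset.sum_comm]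
      calc ∑ j, ∑ i, A k i j * y k j = ∑ j, (∑ i, A k i j) * y k j := by
            simp [Finset.sum_mul]
        _ = ∑ j, y k j := by simp [hcol]
        _ = n := ih
  have hstep : ∀ k i, (1/n : ℝ) * y k i ≤ y (k+1) i := by
    intro k i
    rw [hy k]
    have h1 : (1/n : ℝ) * y k i ≤ A k i i * y k i :=
      mul_le_mul_of_nonneg_right (hpos k i i (hdiag k i)) (hynn k i)
    refine h1.trans ?_
    exact Finset.single_le_sum (f := fun j => A k i j * y k j)
      (fun j _ => mul_nonneg (hnonneg k i j) (hynn k j)) (Finset.mem_univ i)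
  have hblockvec : ∀ s m, y (s + m) = (blockProd A s m).mulVec (y s) := by
    intro s m
    induction m with
    | zero => simp [blockProd, matProd, Matrix.one_mulVec]
    | succ m ih =>
      have hb : blockProd A s (m+1) = A (s+m) * blockProd A s m := rfl
      have h2 : s + (m+1) = (s+m) + 1 := by ring
      rw [h2, hy (s+m), ih, hb, ← Matrix.mulVec_mulVec]
  have hfull : ∀ l i, ((1:ℝ)/n)^n ≤ y ((l+1)*n) i := by
    intro l i
    have h1 : (l+1)*n = l*n + n := by ring
    rw [h1, hblockvec (l*n) n]
    simp only [Matrix.mulVec, dotProduct]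
    have h2 : ((1:ℝ)/n)^n * n ≤ ∑ j, blockProd A (l*n) n i j * y (l*n) j := by
      have h3 : ∑ j, ((1:ℝ)/n)^n * y (l*n) j ≤ ∑ j, blockProd A (l*n) n i j * y (l*n) j :=
        Finset.sum_le_sum fun j _ =>
          mul_le_mul_of_nonneg_right (hblock l i j) (hynn (l*n) j)
      rw [← Finset.mul_sum, hsum (l*n)] at h3
      exact h3
    calc ((1:ℝ)/n)^n ≤ ((1:ℝ)/n)^n * n :=
          le_mul_of_one_le_right (by positivity) (by exact_mod_cast hn)
      _ ≤ _ := h2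
  have hiter : ∀ s r i, ((1:ℝ)/n)^r * y s i ≤ y (s + r) i := by
    intro s r i
    induction r with
    | zero => simp
    | succ r ih =>
      calc ((1:ℝ)/n)^(r+1) * y s i = (1/n) * (((1:ℝ)/n)^r * y s i) := by ring
        _ ≤ (1/n) * y (s+r) i := mul_le_mul_of_nonneg_left ih (le_of_lt h1n)
        _ ≤ y (s + (r+1)) i := hstep (s+r) i
  intro k i
  rcases lt_or_ge k n with hk | hk
  · have h1 := hiter 0 k i
    simp only [hy0, zero_add, mul_one] at h1
    refine le_trans ?_ h1
    exact pow_le_pow_of_le_one (le_of_lt h1n) h1n1 (by omega)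
  · obtain ⟨q, r, hr, hqr⟩ : ∃ q r, r < n ∧ k = q*n + r :=
      ⟨k/n, k%n, Nat.mod_lt k hn, by rw [Nat.add_comm]; exact (Nat.mod_add_div' k n).symm⟩
    have hq : 1 ≤ q := by
      rcases Nat.eq_zero_or_pos q with h | h
      · subst h; simp at hqr; omega
      · exact h
    obtain ⟨l, hl⟩ : ∃ l, q = l + 1 := ⟨q - 1, by omega⟩
    have h1 : ((1:ℝ)/n)^n ≤ y (q*n) i := hl ▸ hfull l i
    have h2 := hiter (q*n) r i
    rw [← hqr] at h2
    calc ((1:ℝ)/n)^(2*n) ≤ ((1:ℝ)/n)^(r+n) :=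
          pow_le_pow_of_le_one (le_of_lt h1n) h1n1 (by omega)
      _ = ((1:ℝ)/n)^r * ((1:ℝ)/n)^n := by rw [pow_add]
      _ ≤ ((1:ℝ)/n)^r * y (q*n) i := mul_le_mul_of_nonneg_left h1 (by positivity)
      _ ≤ y k i := h2
end
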